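/- Consider sequences (m_0, m_1, ..., m_{n-1}) of positive integers with m_{n-1} = 1 generated backwards by the rules: m_i = m_{i+1}, or m_i = (j−i)·m_{i+1} when m_{i+1} = ... = m_j (case of a maximal straight path followed by a curved edge), or m_i = m_j + (j−i−1)·m_{i+1} (straight case), as in an Enriques diagram of complexity n. Then m_0 ≤ F_n, where F_n is the n-th Fibonacci number, and the bound F_n is attained. -/

import Mathlib

/-- Symbols of Enriques diagrams: `Sum.inl k` is the vertex `v_k`,
`Sum.inr k` is the edge `e_k`. -/
abbrev ESym : Type := ℕ ⊕ ℕ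

def vtx (k : ℕ) : ESym := Sum.inl k
def edg (k : ℕ) : ESym := Sum.inr k

/-- The set `S_n = {v_2,…,v_{n-2}, e_2,…,e_{n-2}}` of undetermined symbols. -/
def symbols (n : ℕ) : Finset ESym :=
  ((Finset.Icc 2 (n - 2)).image vtx) ∪ ((Finset.Icc 2 (n - 2)).image edg)

/-- A code of an Enriques diagram of complexity `n`: a subset `χ ⊆ S_n` such that
`v_i ∈ χ` implies `e_i ∈ χ` and (`e_{i+1} ∈ χ` or `i = n-2`). -/
def IsCode (n : ℕ) (χ : Finset ESym) : Prop :=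
  χ ⊆ symbols n ∧
    ∀ i ∈ Finset.Icc 2 (n - 2), vtx i ∈ χ →
      edg i ∈ χ ∧ (edg (i + 1) ∈ χ ∨ i = n - 2)

instance (n : ℕ) : DecidablePred (IsCode n) := fun χ => by
  unfold IsCode; infer_instance

/-- The length of the maximal straight run of edges `e_{i+2}, e_{i+3}, …`
starting after the vertex `v_{i+1}` (edges must be straight, i.e. equal to
`e_{n-1}` or in `χ`, and the interior vertices must be neutral). -/
def runLen (n : ℕ) (χ : Finset ESym) (i : ℕ) : ℕ :=
  Nat.findGreatest
    (fun r => ∀ d < r,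
      ((i + 2 + d = n - 1 ∨ edg (i + 2 + d) ∈ χ) ∧
        (1 ≤ d → vtx (i + 1 + d) ∉ χ))) n

/-- The multiplicity sequence of the Enriques diagram with code `χ` of
complexity `n`, computed backwards from `m_{n-1} = 1` by the rules of the
paper: if a maximal straight path `[v_{i+1} v_j]` starts at `v_{i+1}` (i.e.
`e_{i+2}` is straight and either `e_{i+1}` is curved or `v_{i+1}` is breaking)
then `m_i = Σ_{k=i+1}^{j} m_k`, and otherwise `m_i = m_{i+1}`. -/
def mult (n : ℕ) (χ : Finset ESym) (i : ℕ) : ℕ :=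
  if h : n - 1 ≤ i then 1
  else
    if ((i + 2 = n - 1 ∨ edg (i + 2) ∈ χ) ∧
        ((¬(i + 1 = n - 1 ∨ edg (i + 1) ∈ χ)) ∨ vtx (i + 1) ∈ χ)) then
      ∑ k ∈ (Finset.Icc (i + 1) (i + 1 + runLen n χ i)).attach, mult n χ k.1
    else mult n χ (i + 1)
termination_by n - i
decreasing_by
  · have hk := (Finset.mem_Icc.mp k.2).1
    omega
  · omega

lemma mem_symbols_vtx {n k : ℕ} : vtx k ∈ symbols n ↔ 2 ≤ k ∧ k ≤ n - 2 := by
  simp [symbols, vtx, edg]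

lemma mem_symbols_edg {n k : ℕ} : edg k ∈ symbols n ↔ 2 ≤ k ∧ k ≤ n - 2 := by
  simp [symbols, vtx, edg]

lemma fib_aux (r s : ℕ) (hr : 1 ≤ r) :
    r * Nat.fib (s + 1) + Nat.fib s ≤ Nat.fib (s + 1 + r) := by
  induction r with
  | zero => omega
  | succ r ih =>
    rcases Nat.eq_zero_or_pos r with h0 | h0
    · subst h0
      have h : Nat.fib (s + 1 + (0 + 1)) = Nat.fib s + Nat.fib (s + 1) := by
        rw [show s + 1 + (0 + 1) = s + 2 from by omega]
        exact Nat.fib_add_two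
      omega
    · have h1 := ih h0
      have h2 : Nat.fib (s + 1) ≤ Nat.fib (s + r) := Nat.fib_mono (by omega)
      calc (r + 1) * Nat.fib (s + 1) + Nat.fib s
          = (r * Nat.fib (s + 1) + Nat.fib s) + Nat.fib (s + 1) := by ring
        _ ≤ Nat.fib (s + 1 + r) + Nat.fib (s + r) := by omega
        _ = Nat.fib (s + 1 + (r + 1)) := by
            rw [show s + 1 + (r + 1) = s + r + 2 from by omega, Nat.fib_add_two,
              show s + r + 1 = s + 1 + r from by omega, Nat.add_comm]

lemma mult_le_fib (n : ℕ) (χ : Finset ESym) (hsub : χ ⊆ symbols n) :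
    ∀ t i, n = i + t → 1 ≤ t → mult n χ i ≤ Nat.fib t := by
  have hedge : ∀ m, edg m ∈ χ → 2 ≤ m ∧ m ≤ n - 2 := fun m hm =>
    mem_symbols_edg.mp (hsub hm)
  intro t
  induction t using Nat.strong_induction_on with
  | _ t ih =>
  intro i hn ht
  rw [mult]
  by_cases h1 : n - 1 ≤ i
  · rw [dif_pos h1]
    have ht1 : t = 1 := by omega
    simp [ht1]
  · rw [dif_neg h1]
    by_cases hc : ((i + 2 = n - 1 ∨ edg (i + 2) ∈ χ) ∧
        ((¬(i + 1 = n - 1 ∨ edg (i + 1) ∈ χ)) ∨ vtx (i + 1) ∈ χ))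
    · rw [if_pos hc]
      have ht2 : 2 ≤ t := by omega
      have hP1 : ∀ d < 1, ((i + 2 + d = n - 1 ∨ edg (i + 2 + d) ∈ χ) ∧
          (1 ≤ d → vtx (i + 1 + d) ∉ χ)) := by
        intro d hd
        have : d = 0 := by omega
        subst this
        exact ⟨by simpa using hc.1, by omega⟩
      have hr1 : 1 ≤ runLen n χ i := by
        unfold runLen
        exact Nat.le_findGreatest (by omega) hP1
      have hPr : ∀ d < runLen n χ i, ((i + 2 + d = n - 1 ∨ edg (i + 2 + d) ∈ χ) ∧
          (1 ≤ d → vtx (i + 1 + d) ∉ χ)) := by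
        unfold runLen
        exact Nat.findGreatest_spec
          (P := fun r => ∀ d < r, ((i + 2 + d = n - 1 ∨ edg (i + 2 + d) ∈ χ) ∧
            (1 ≤ d → vtx (i + 1 + d) ∉ χ))) (m := 1) (by omega) hP1
      have hrt : runLen n χ i + 2 ≤ t := by
        have := (hPr (runLen n χ i - 1) (by omega)).1
        rcases this with h | h
        · omega
        · have := (hedge _ h).2
          omega
      -- all multiplicities along the run are equal
      set r := runLen n χ i with hrdef
      have heq : ∀ j k, i + r - k ≤ j → i + 1 ≤ k → k ≤ i + r →
          mult n χ k = mult n χ (i + r) := by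
        intro j
        induction j with
        | zero =>
          intro k h0 hk1 hk2
          have : k = i + r := by omega
          rw [this]
        | succ j ihj =>
          intro k h0 hk1 hk2
          rcases eq_or_lt_of_le hk2 with he | hlt
          · rw [he]
          · have hkn : ¬ (n - 1 ≤ k) := by omega
            have hE := (hPr (k - i - 1) (by omega)).1
            rw [show i + 2 + (k - i - 1) = k + 1 from by omega] at hE
            have hV := (hPr (k - i) (by omega)).2 (by omega)
            rw [show i + 1 + (k - i) = k + 1 from by omega] at hV
            rw [mult, dif_neg hkn, if_neg, ihj (k + 1) (by omega) (by omega) (by omega)]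
            rintro ⟨-, h2⟩
            rcases h2 with h | h
            · exact h hE
            · exact hV h
      have heq' : ∀ k ∈ Finset.Icc (i + 1) (i + r), mult n χ k = mult n χ (i + r) := by
        intro k hk
        rw [Finset.mem_Icc] at hk
        exact heq (i + r - k) k le_rfl hk.1 hk.2
      rw [Finset.sum_attach]
      rw [show i + 1 + r = (i + r) + 1 from by omega,
        Finset.sum_Icc_succ_top (by omega) (mult n χ)]
      rw [Finset.sum_congr rfl heq', Finset.sum_const, Nat.card_Icc, smul_eq_mul]
      rw [show i + r + 1 - (i + 1) = r from by omega]
      have m1 : mult n χ (i + r) ≤ Nat.fib (t - r) :=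
        ih (t - r) (by omega) (i + r) (by omega) (by omega)
      have m2 : mult n χ (i + r + 1) ≤ Nat.fib (t - r - 1) :=
        ih (t - r - 1) (by omega) (i + r + 1) (by omega) (by omega)
      have hf := fib_aux r (t - r - 1) hr1
      rw [show t - r - 1 + 1 = t - r from by omega] at hf
      rw [show t - r + r = t from by omega] at hf
      have := Nat.mul_le_mul_left r m1
      omega
    · rw [if_neg hc]
      calc mult n χ (i + 1) ≤ Nat.fib (t - 1) :=
            ih (t - 1) (by omega) (i + 1) (by omega) (by omega)
        _ ≤ Nat.fib t := Nat.fib_mono (by omega)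

lemma isCode_symbols (n : ℕ) : IsCode n (symbols n) := by
  refine ⟨subset_rfl, ?_⟩
  intro i hi _
  rw [Finset.mem_Icc] at hi
  refine ⟨mem_symbols_edg.mpr ⟨hi.1, hi.2⟩, ?_⟩
  rcases eq_or_lt_of_le hi.2 with he | hlt
  · exact Or.inr he
  · exact Or.inl (mem_symbols_edg.mpr ⟨by omega, by omega⟩)

lemma mult_symbols (n : ℕ) (hn : 3 ≤ n) :
    ∀ t i, n = i + t → 1 ≤ t → mult n (symbols n) i = Nat.fib t := by
  intro t
  induction t using Nat.strong_induction_on with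
  | _ t ih =>
  intro i hnt ht
  rw [mult]
  rcases eq_or_lt_of_le ht with h1 | h1
  · rw [dif_pos (by omega)]
    simp [← h1]
  · rw [dif_neg (by omega)]
    rcases eq_or_lt_of_le (show 2 ≤ t from h1) with h2 | h2
    · -- t = 2, i = n - 2 : curved last edge case
      rw [if_neg, ih 1 (by omega) (i + 1) (by omega) (by omega)]
      · simp [← h2]
      · rintro ⟨h | h, -⟩
        · omega
        · have := (mem_symbols_edg.mp h).2
          omega
    · -- t ≥ 3
      have hi3 : i + 3 ≤ n := by omega
      have hcond : ((i + 2 = n - 1 ∨ edg (i + 2) ∈ symbols n) ∧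
          ((¬(i + 1 = n - 1 ∨ edg (i + 1) ∈ symbols n)) ∨ vtx (i + 1) ∈ symbols n)) := by
        constructor
        · rcases Nat.lt_or_ge i (n - 3) with h | h
          · exact Or.inr (mem_symbols_edg.mpr ⟨by omega, by omega⟩)
          · exact Or.inl (by omega)
        · rcases Nat.eq_zero_or_pos i with h0 | h0
          · subst h0
            refine Or.inl ?_
            rintro (h | h)
            · omega
            · have := (mem_symbols_edg.mp h).1
              omega
          · exact Or.inr (mem_symbols_vtx.mpr ⟨by omega, by omega⟩)
      rw [if_pos hcond]
      have hrun : runLen n (symbols n) i = 1 := by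
        unfold runLen
        rw [Nat.findGreatest_eq_iff]
        refine ⟨by omega, fun _ => ?_, fun m hm1 hm2 hP => ?_⟩
        · intro d hd
          have : d = 0 := by omega
          subst this
          exact ⟨by simpa using hcond.1, by omega⟩
        · have h1d := hP 1 (by omega)
          rcases Nat.lt_or_ge i (n - 3) with h | h
          · exact (h1d.2 (by omega)) (mem_symbols_vtx.mpr ⟨by omega, by omega⟩)
          · rcases h1d.1 with h' | h'
            · omega
            · have := (mem_symbols_edg.mp h').2
              omega
      rw [hrun, Finset.sum_attach]
      rw [show i + 1 + 1 = (i + 1) + 1 from rfl,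
        Finset.sum_Icc_succ_top (by omega) (mult n (symbols n))]
      rw [Finset.Icc_self, Finset.sum_singleton]
      rw [ih (t - 1) (by omega) (i + 1) (by omega) (by omega),
        ih (t - 2) (by omega) (i + 1 + 1) (by omega) (by omega)]
      have : Nat.fib (t - 2 + 2) = Nat.fib (t - 2) + Nat.fib (t - 2 + 1) := Nat.fib_add_two
      rw [show t - 2 + 2 = t from by omega, show t - 2 + 1 = t - 1 from by omega] at this
      omega

/-- The maximal initial multiplicity `m_0` over all Enriques diagrams of
complexity `n` is the Fibonacci number `F_n`, and it is attained. -/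
theorem stmt16 (n : ℕ) (hn : 3 ≤ n) :
    (∀ χ : Finset ESym, IsCode n χ → mult n χ 0 ≤ Nat.fib n) ∧
    (∃ χ : Finset ESym, IsCode n χ ∧ mult n χ 0 = Nat.fib n) := by
  constructor
  · intro χ hχ
    exact mult_le_fib n χ hχ.1 n 0 (by omega) (by omega)
  · exact ⟨symbols n, isCode_symbols n, mult_symbols n hn n 0 (by omega) (by omega)⟩
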